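/- If G has odd girth g (i.e., the shortest odd cycle in G has length g), then for every r ≥ 1 the generalised Mycielskian M_r(G) has odd girth at least min(g, 2r+1). -/

import Mathlib

/-- The generalised Mycielskian `M_r(G)`: vertex set `V × {0,…,r−1} ∪ {z}`
(`none` plays the role of `z`), with edges `{(u,0),(v,0)}` and `{(u,i),(v,i+1)}`
whenever `{u,v} ∈ E(G)`, and edges `{(u,r−1),z}` for all `u`. -/
def genMycielski {V : Type} (G : SimpleGraph V) (r : ℕ) :
    SimpleGraph (Option (V × Fin r)) :=
  SimpleGraph.fromRel (fun a b =>
    match a, b with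
    | some (u, i), some (v, j) =>
        G.Adj u v ∧ ((i : ℕ) = 0 ∧ (j : ℕ) = 0 ∨ (j : ℕ) = (i : ℕ) + 1)
    | some (_, i), none => (i : ℕ) = r - 1
    | _, _ => False)


/-- The odd girth of `G`: the length of a shortest odd cycle (`⊤` if none). -/
noncomputable def oddGirth {V : Type} (G : SimpleGraph V) : ℕ∞ :=
  sInf {n : ℕ∞ | ∃ (v : V) (c : G.Walk v v), c.IsCycle ∧ Odd c.length ∧ (c.length : ℕ∞) = n}

open SimpleGraph Walk

/-- Any closed walk of odd length contains an odd cycle of no greater length. -/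
theorem oddClosedWalk_exists_oddCycle {V : Type} (G : SimpleGraph V) :
    ∀ (n : ℕ) {v : V} (w : G.Walk v v), w.length = n → Odd w.length →
      ∃ (u : V) (c : G.Walk u u), c.IsCycle ∧ Odd c.length ∧ c.length ≤ w.length := by
  intro n
  induction n using Nat.strong_induction_on with
  | _ n ih =>
    intro v w hn hodd
    classical
    by_cases hdup : w.support.tail.Nodup
    · -- w itself is a cycle
      cases w with
      | nil => simp [Nat.odd_iff] at hodd
      | @cons _ x _ h p =>
        cases p with
        | nil => exact absurd h (G.loopless.irrefl v)
        | @cons _ y _ h' q =>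
          have hp : (Walk.cons h' q).IsPath := by
            rw [Walk.isPath_def]
            simpa using hdup
          have hxq : x ∉ q.support := by
            have := hp
            rw [Walk.cons_isPath_iff] at this
            exact this.2
          have hq : q.IsPath := ((Walk.cons_isPath_iff _ _).mp hp).1
          have he : ¬ s(v, x) ∈ ((⟨Walk.cons h' q, hp⟩ : G.Path x v) : G.Walk x v).edges := by
            intro hmem
            simp only [Walk.edges_cons, List.mem_cons] at hmem
            rcases hmem with h1 | h2
            · rw [Sym2.eq_iff] at h1
              rcases h1 with ⟨h1a, h1b⟩ | ⟨h1a, h1b⟩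
              · subst h1a; exact G.loopless.irrefl _ h
              · subst h1a
                cases q with
                | nil => simp [Nat.odd_iff] at hodd
                | cons h'' q'' =>
                  exact ((Walk.cons_isPath_iff _ _).mp hq).2 (Walk.end_mem_support q'')
            · exact hxq (q.fst_mem_support_of_mem_edges (Sym2.eq_swap ▸ h2 : s(x, v) ∈ q.edges))
          have hc : (Walk.cons h ((⟨Walk.cons h' q, hp⟩ : G.Path x v) : G.Walk x v)).IsCycle :=
            SimpleGraph.Path.cons_isCycle _ h he
          exact ⟨v, _, hc, hodd, le_rfl⟩
    · -- duplicate vertex: split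
      obtain ⟨u, hu⟩ := List.exists_duplicate_iff_not_nodup.mpr hdup
      have hus : u ∈ w.support := List.mem_of_mem_tail hu.mem
      set w' := w.rotate u hus with hw'
      have hlen' : w'.length = w.length := by
        have := (w.rotate_edges u hus).perm.length_eq
        exact Walk.length_rotate w u hus
      have hcount : 2 ≤ w'.support.tail.count u := by
        have hrot := w.support_rotate u hus
        have := hrot.perm.count_eq u
        rw [this]
        exact List.duplicate_iff_two_le_count.mp hu
      cases hw2 : w' with
      | nil => rw [hw2] at hlen'; rw [← hlen'] at hodd; simp at hodd
      | @cons _ x _ h p =>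
        have hxp : u ∈ p.support := by
          have : 1 ≤ p.support.count u := by
            have : w'.support.tail = p.support := by rw [hw2]; simp
            rw [this] at hcount; omega
          exact List.count_pos_iff.mp (by omega)
        have hspec := p.take_spec hxp
        have hone := p.count_support_takeUntil_eq_one hxp
        set p1 := p.takeUntil u hxp
        set p2 := p.dropUntil u hxp
        have hlsum : p1.length + p2.length = p.length := by
          have := congr_arg Walk.length hspec
          simpa [Walk.length_append] using this
        have hp2pos : 1 ≤ p2.length := by
          rcases Nat.eq_zero_or_pos p2.length with h0 | h1
          · exfalso
            have hnil : p2 = Walk.nil := Walk.nil_iff_eq_nil.mp (Walk.length_eq_zero_iff.mp h0)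
            have hps : p.support = p1.support := by
              conv_lhs => rw [← hspec]
              rw [hnil]
              simp [Walk.support_append]
            have h2 : 2 ≤ p.support.count u := by
              have hts : w'.support.tail = p.support := by rw [hw2]; simp
              rwa [hts] at hcount
            rw [hps, hone] at h2
            omega
          · exact h1
        have hlens : (Walk.cons h p1).length + p2.length = w.length := by
          have h3 : w'.length = p.length + 1 := by rw [hw2]; simp [Walk.length_cons]
          have h4 : (Walk.cons h p1).length = p1.length + 1 := Walk.length_cons _ _
          omega
        have h5 : 1 ≤ (Walk.cons h p1).length := by simp [Walk.length_cons]
        have hodd' : Odd ((Walk.cons h p1).length) ∨ Odd p2.length := by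
          rcases Nat.even_or_odd (Walk.cons h p1).length with he | ho
          · right
            rcases Nat.even_or_odd p2.length with he2 | ho2
            · exfalso
              have : Even w.length := by rw [← hlens]; exact he.add he2
              exact (Nat.not_even_iff_odd.mpr hodd) this
            · exact ho2
          · left; exact ho
        rcases hodd' with ho | ho
        · obtain ⟨u', c, hc, hco, hcl⟩ := ih (Walk.cons h p1).length (by omega) (Walk.cons h p1) rfl ho
          exact ⟨u', c, hc, hco, by omega⟩
        · obtain ⟨u', c, hc, hco, hcl⟩ := ih p2.length (by omega) p2 rfl ho
          exact ⟨u', c, hc, hco, by omega⟩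

/-- The level of a vertex of the generalised Mycielskian: `z` has level `r`. -/
def mycLvl {V : Type} {r : ℕ} : Option (V × Fin r) → ℕ
  | none => r
  | some (_, i) => i

theorem myc_adj_step {V : Type} {G : SimpleGraph V} {r : ℕ} {a b : Option (V × Fin r)}
    (h : (genMycielski G r).Adj a b) :
    (mycLvl b ≤ mycLvl a + 1 ∧ mycLvl a ≤ mycLvl b + 1) ∧
      (mycLvl a = mycLvl b → mycLvl a = 0) := by
  rw [genMycielski, SimpleGraph.fromRel_adj] at h
  obtain ⟨hne, h | h⟩ := h
  · match a, b with
    | none, none => exact absurd h id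
    | none, some (v, j) => exact absurd h id
    | some (u, i), none =>
      have h' : (i : ℕ) = r - 1 := h
      have := i.isLt
      simp only [mycLvl]
      omega
    | some (u, i), some (v, j) =>
      have h' : (i : ℕ) = 0 ∧ (j : ℕ) = 0 ∨ (j : ℕ) = (i : ℕ) + 1 := h.2
      simp only [mycLvl]
      omega
  · match a, b with
    | none, none => exact absurd h id
    | some (u, i), none => exact absurd h id
    | none, some (v, j) =>
      have h' : (j : ℕ) = r - 1 := h
      have := j.isLt
      simp only [mycLvl]
      omega
    | some (u, i), some (v, j) =>
      have h' : (j : ℕ) = 0 ∧ (i : ℕ) = 0 ∨ (i : ℕ) = (j : ℕ) + 1 := h.2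
      simp only [mycLvl]
      omega

theorem myc_adj_some {V : Type} {G : SimpleGraph V} {r : ℕ} {u v : V} {i j : Fin r}
    (h : (genMycielski G r).Adj (some (u, i)) (some (v, j))) : G.Adj u v := by
  rw [genMycielski, SimpleGraph.fromRel_adj] at h
  obtain ⟨hne, h | h⟩ := h
  · exact h.1
  · exact h.1.symm

theorem myc_walk_lvl_bound {V : Type} {G : SimpleGraph V} {r : ℕ} :
    ∀ {a b : Option (V × Fin r)} (w : (genMycielski G r).Walk a b),
      mycLvl a ≤ mycLvl b + w.length ∧ mycLvl b ≤ mycLvl a + w.length := by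
  intro a b w
  induction w with
  | nil => simp
  | @cons a x b h p ih =>
    have := (myc_adj_step h).1
    simp only [Walk.length_cons]
    omega

theorem myc_walk_parity {V : Type} {G : SimpleGraph V} {r : ℕ} :
    ∀ {a b : Option (V × Fin r)} (w : (genMycielski G r).Walk a b),
      (∀ x ∈ w.support, mycLvl x ≠ 0) → (w.length + mycLvl a + mycLvl b) % 2 = 0 := by
  intro a b w
  induction w with
  | nil => intro _; simp only [Walk.length_nil]; omega
  | @cons a x b h p ih =>
    intro hs
    have ha0 : mycLvl a ≠ 0 := hs a (by simp)
    have ih' := ih (fun y hy => hs y (by simp [hy]))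
    have h1 := (myc_adj_step h).1
    have h2 := (myc_adj_step h).2
    simp only [Walk.length_cons]
    omega

theorem myc_proj {V : Type} {G : SimpleGraph V} {r : ℕ} :
    ∀ {a b : Option (V × Fin r)} (w : (genMycielski G r).Walk a b),
      (∀ x ∈ w.support, x ≠ none) →
      ∀ (u : V) (iu : Fin r) (v : V) (iv : Fin r), a = some (u, iu) → b = some (v, iv) →
      ∃ w' : G.Walk u v, w'.length = w.length := by
  intro a b w
  induction w with
  | nil =>
    intro _ u iu v iv ha hb
    rw [ha] at hb
    obtain ⟨rfl, rfl⟩ : u = v ∧ iu = iv := by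
      injection hb with hb'
      exact ⟨congr_arg Prod.fst hb', congr_arg Prod.snd hb'⟩
    exact ⟨Walk.nil, rfl⟩
  | @cons a x b h p ih =>
    intro hs u iu v iv ha hb
    have hx : x ≠ none := hs x (by simp)
    match x, hx with
    | some (u', i'), _ =>
      have hadj : G.Adj u u' := myc_adj_some (ha ▸ h)
      obtain ⟨w', hw'⟩ := ih (fun y hy => hs y (by simp [hy])) u' i' v iv rfl hb
      exact ⟨Walk.cons hadj w', by simp [Walk.length_cons, hw']⟩

/-- If `G` has odd girth `g`, then for every `r ≥ 1` the generalised
Mycielskian `M_r(G)` has odd girth at least `min(g, 2r+1)`. -/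
theorem oddGirth_genMycielski {V : Type} (G : SimpleGraph V) (g : ℕ)
    (hg : oddGirth G = (g : ℕ∞)) (r : ℕ) (hr : 1 ≤ r) :
    min (g : ℕ∞) ((2 * r + 1 : ℕ) : ℕ∞) ≤ oddGirth (genMycielski G r) := by
  classical
  rw [oddGirth]
  apply le_sInf
  rintro n ⟨a, c, hcyc, hodd, rfl⟩
  by_cases hz : (none : Option (V × Fin r)) ∈ c.support
  · refine le_trans (min_le_right _ _) ?_
    rw [Nat.cast_le]
    set c' := c.rotate none hz with hc'
    have hlen : c'.length = c.length := by
      have := (c.rotate_edges none hz).perm.length_eq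
      exact Walk.length_rotate c none hz
    by_cases h0 : ∃ x ∈ c'.support, mycLvl x = 0
    · obtain ⟨x, hx, hx0⟩ := h0
      have hspec := c'.take_spec hx
      have hq1 := (myc_walk_lvl_bound (c'.takeUntil x hx)).1
      have hq2 := (myc_walk_lvl_bound (c'.dropUntil x hx)).2
      have hsum : (c'.takeUntil x hx).length + (c'.dropUntil x hx).length = c'.length := by
        have h := congr_arg Walk.length hspec
        rwa [Walk.length_append] at h
      have hlvlnone : mycLvl (none : Option (V × Fin r)) = r := rfl
      rw [hlvlnone, hx0] at hq1 hq2
      have hoddn : c.length % 2 = 1 := Nat.odd_iff.mp hodd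
      omega
    · push_neg at h0
      have := myc_walk_parity c' h0
      have hoddn : c.length % 2 = 1 := Nat.odd_iff.mp hodd
      have hlvlnone : mycLvl (none : Option (V × Fin r)) = r := rfl
      rw [hlvlnone] at this
      omega
  · refine le_trans (min_le_left _ _) ?_
    have hne : ∀ x ∈ c.support, x ≠ none := fun x hx he => hz (he ▸ hx)
    have ha : a ≠ none := hne a c.start_mem_support
    match a, ha with
    | some (u, i), _ =>
      obtain ⟨w', hw'⟩ := myc_proj c hne u i u i rfl rfl
      have hwodd : Odd w'.length := hw' ▸ hodd
      obtain ⟨u', cyc, hcyc', hodd', hle⟩ :=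
        oddClosedWalk_exists_oddCycle G w'.length w' rfl hwodd
      have hmem : ((cyc.length : ℕ) : ℕ∞) ∈
          {n : ℕ∞ | ∃ (v : V) (c : G.Walk v v), c.IsCycle ∧ Odd c.length ∧ (c.length : ℕ∞) = n} :=
        ⟨u', cyc, hcyc', hodd', rfl⟩
      have hginf : oddGirth G ≤ (cyc.length : ℕ∞) := sInf_le hmem
      rw [hg] at hginf
      refine le_trans hginf ?_
      rw [Nat.cast_le]
      omega
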